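/- The Dedekind-type sum identity: for every integer N ≥ 1, Σ_{k=1}^{N} 1/sin²(πk/(N+1)) = N(N+2)/3. -/

import Mathlib

open Real Finset

lemma sumId (n : ℕ) : ∑ j ∈ range n, (j:ℂ) = n*(n-1)/2 := by
  induction n with
  | zero => simp
  | succ m ih => rw [Finset.sum_range_succ, ih]; push_cast; ring

lemma sumSq (n : ℕ) : ∑ j ∈ range n, (j:ℂ)^2 = n*(n-1)*(2*n-1)/6 := by
  induction n with
  | zero => simp
  | succ m ih => rw [Finset.sum_range_succ, ih]; push_cast; ring

lemma geomDeriv (ζ : ℂ) (n : ℕ) :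
    (1-ζ) * ∑ j ∈ range n, (j:ℂ)*ζ^j = (∑ j ∈ range n, ζ^j) + (1-(n:ℂ))*ζ^n - 1 := by
  induction n with
  | zero => simp
  | succ m ih =>
    rw [Finset.sum_range_succ, Finset.sum_range_succ (f := fun j => ζ^j)]
    push_cast
    rw [mul_add, ih]
    ring

lemma invOneSub (n : ℕ) (hn : 0 < n) (ζ : ℂ) (h1 : ζ^n = 1) (h2 : ζ ≠ 1) :
    (1-ζ)⁻¹ = -(∑ j ∈ range n, (j:ℂ)*ζ^j)/n := by
  have hz : (1:ℂ) - ζ ≠ 0 := by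
    intro h; apply h2; linear_combination -h
  have hgs : ∑ j ∈ range n, ζ^j = 0 := by
    have := geom_sum_mul ζ n
    rw [h1, sub_self] at this
    rcases mul_eq_zero.1 this with h | h
    · exact h
    · exact absurd (by linear_combination -h) hz
  have key : (1-ζ) * ∑ j ∈ range n, (j:ℂ)*ζ^j = -n := by
    rw [geomDeriv, hgs, h1]; ring
  have hn' : (n:ℂ) ≠ 0 := Nat.cast_ne_zero.2 hn.ne'
  field_simp
  linear_combination key

lemma expPow (n m : ℕ) (hn : 0 < n) :
    Complex.exp (2*π*Complex.I*m/n) ^ n = 1 := by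
  have hn' : (n:ℂ) ≠ 0 := Nat.cast_ne_zero.2 hn.ne'
  rw [← Complex.exp_nat_mul]
  have : (n:ℂ) * (2*π*Complex.I*m/n) = m*(2*π*Complex.I) := by field_simp
  rw [this]
  exact_mod_cast Complex.exp_int_mul_two_pi_mul_I m

lemma expDvd (n m : ℕ) (hn : 0 < n) (h : n ∣ m) :
    Complex.exp (2*π*Complex.I*m/n) = 1 := by
  obtain ⟨t, rfl⟩ := h
  have hn' : (n:ℂ) ≠ 0 := Nat.cast_ne_zero.2 hn.ne'
  have : (2*π*Complex.I*(n*t:ℕ)/n : ℂ) = t*(2*π*Complex.I) := by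
    push_cast; field_simp
  rw [this]
  exact_mod_cast Complex.exp_int_mul_two_pi_mul_I t

lemma expNotDvd (n m : ℕ) (hn : 0 < n) (h : ¬ n ∣ m) :
    Complex.exp (2*π*Complex.I*m/n) ≠ 1 := by
  intro he
  rw [Complex.exp_eq_one_iff] at he
  obtain ⟨t, ht⟩ := he
  have hn' : (n:ℂ) ≠ 0 := Nat.cast_ne_zero.2 hn.ne'
  have hI : (2*π*Complex.I : ℂ) ≠ 0 := by
    simp [Real.pi_ne_zero, Complex.I_ne_zero, Complex.ofReal_ne_zero]
  have hmt : (m:ℂ) = t*n := by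
    apply mul_left_cancel₀ hI
    field_simp at ht
    linear_combination (2*π*Complex.I) * ht
  have hmt' : (m:ℤ) = t*n := by exact_mod_cast hmt
  exact h (Int.natCast_dvd_natCast.1 ⟨t, by linear_combination hmt'⟩)

lemma orth (n m : ℕ) (hn : 0 < n) :
    ∑ k ∈ range n, Complex.exp (2*π*Complex.I*m/n)^k = if n ∣ m then (n:ℂ) else 0 := by
  by_cases h : n ∣ m
  · simp [expDvd n m hn h, h]
  · rw [if_neg h]
    have hζ := expNotDvd n m hn h
    have := geom_sum_mul (Complex.exp (2*π*Complex.I*m/n)) n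
    rw [expPow n m hn, sub_self] at this
    rcases mul_eq_zero.1 this with h' | h'
    · exact h'
    · exact absurd (by linear_combination h') (sub_ne_zero.2 hζ)

lemma orthIcc (N j : ℕ) :
    ∑ k ∈ Icc 1 N, Complex.exp (2*π*Complex.I*k/(N+1:ℕ))^j
      = (if (N+1) ∣ j then ((N+1:ℕ):ℂ) else 0) - 1 := by
  have hswap : ∀ k : ℕ, Complex.exp (2*π*Complex.I*k/(N+1:ℕ))^j
      = Complex.exp (2*π*Complex.I*j/(N+1:ℕ))^k := by
    intro k
    rw [← Complex.exp_nat_mul, ← Complex.exp_nat_mul]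
    congr 1; ring
  simp only [hswap]
  have horth := orth (N+1) j (Nat.succ_pos N)
  have hins : range (N+1) = insert 0 (Icc 1 N) := by
    ext x; simp [Finset.mem_range, Finset.mem_Icc, Nat.lt_succ_iff]; omega
  rw [hins, Finset.sum_insert (by simp)] at horth
  rw [pow_zero] at horth
  linear_combination horth

lemma sinSq (z : ℂ) : Complex.sin z ^2
    = -(Complex.exp (z*Complex.I)^2 - 1)^2 / (4 * Complex.exp (z*Complex.I)^2) := by
  have h4 := Complex.exp_ne_zero (z*Complex.I)
  have hneg : Complex.exp (-z*Complex.I) = (Complex.exp (z*Complex.I))⁻¹ := by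
    rw [← Complex.exp_neg]; congr 1; ring
  rw [Complex.sin, hneg]
  have hI := Complex.I_sq
  field_simp
  linear_combination (4 - 8*Complex.exp (z*Complex.I)^2 + 4*Complex.exp (z*Complex.I)^4) * hI

lemma pointComb (n k : ℕ) (hn : 0 < n) (hk1 : 1 ≤ k) (hk2 : k < n) :
    (1 : ℂ) / Complex.sin ((π : ℂ) * k / n) ^ 2
      = -(4/(n:ℂ)) * (∑ j ∈ range n, (j:ℂ) * Complex.exp (2*π*Complex.I*k/n)^j)
        - (4/(n:ℂ)^2) * (∑ j ∈ range n, (j:ℂ) * Complex.exp (2*π*Complex.I*k/n)^j)^2 := by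
  have hn' : (n:ℂ) ≠ 0 := Nat.cast_ne_zero.2 hn.ne'
  set ω := Complex.exp (2*π*Complex.I*k/n) with hω
  have hω0 : ω ≠ 0 := Complex.exp_ne_zero _
  have hωn : ω ^ n = 1 := expPow n k hn
  have hω1 : ω ≠ 1 := expNotDvd n k hn (by
    intro hd; have := Nat.le_of_dvd (by omega) hd; omega)
  have hz : (1:ℂ) - ω ≠ 0 := by
    intro h; apply hω1; linear_combination -h
  have hsin : Complex.sin ((π:ℂ)*k/n) ^ 2 = -(ω-1)^2/(4*ω) := by
    rw [sinSq]
    have he : Complex.exp (((π:ℂ)*k/n)*Complex.I)^2 = ω := by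
      rw [sq, ← Complex.exp_add, hω]
      congr 1; ring
    rw [he]
  have hrw : Complex.sin ((π:ℂ)*k/n)^2 = ((-4)*ω/((1-ω)^2))⁻¹ := by
    rw [hsin, inv_div]
    rw [div_eq_div_iff (by simpa using hω0) (by simpa using hω0)]
    ring
  have goal1 : (1:ℂ) / Complex.sin ((π:ℂ)*k/n) ^ 2
      = 4*((1-ω)⁻¹) - 4*((1-ω)⁻¹)^2 := by
    rw [hrw, one_div, inv_inv]
    field_simp
    ring
  rw [goal1, invOneSub n hn ω hωn hω1]
  field_simp

lemma innerL (n j : ℕ) (hn : 0 < n) (hj : j < n) :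
    ∑ l ∈ range n, (l:ℂ) * (if n ∣ (j+l) then (n:ℂ) else 0)
      = (n:ℂ) * (((n-j) % n : ℕ):ℂ) := by
  rw [Finset.sum_eq_single_of_mem ((n-j) % n)
      (Finset.mem_range.2 (Nat.mod_lt _ hn))]
  · rw [if_pos, mul_comm]
    rcases Nat.eq_zero_or_pos j with h0 | hpos
    · subst h0; simp
    · rw [Nat.mod_eq_of_lt (by omega : n - j < n)]
      have : j + (n-j) = n := by omega
      rw [this]
  · intro l hl hne
    rw [if_neg, mul_zero]
    intro hdvd
    obtain ⟨t, ht⟩ := hdvd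
    have hlr : l < n := Finset.mem_range.1 hl
    have ht2 : t < 2 := by
      by_contra hge
      push_neg at hge
      have h2 : n * 2 ≤ n * t := Nat.mul_le_mul_left n hge
      have h3 : j + l < n + n := by omega
      linarith
    apply hne
    rcases Nat.eq_zero_or_pos j with h0 | h0
    · subst h0
      simp only [Nat.sub_zero, Nat.mod_self]
      interval_cases t <;> omega
    · rw [Nat.mod_eq_of_lt (by omega : n - j < n)]
      interval_cases t <;> omega

/-- Dedekind-type sum: for every integer `N ≥ 1`,
`∑_{k=1}^{N} 1 / sin²(πk/(N+1)) = N (N+2) / 3`. -/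
theorem sum_inv_sin_sq (N : ℕ) (hN : 1 ≤ N) :
    ∑ k ∈ Finset.Icc 1 N, 1 / Real.sin (π * (k : ℝ) / ((N : ℝ) + 1)) ^ 2
      = (N : ℝ) * ((N : ℝ) + 2) / 3 := by
  have hn : 0 < N + 1 := Nat.succ_pos N
  have hC : ((N+1:ℕ):ℂ) ≠ 0 := Nat.cast_ne_zero.2 hn.ne'
  have hcastR : ((N:ℝ)+1) = ((N+1:ℕ):ℝ) := by push_cast; ring
  rw [hcastR, ← Complex.ofReal_inj, Complex.ofReal_sum]
  simp only [Complex.ofReal_div, Complex.ofReal_one, Complex.ofReal_pow,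
    Complex.ofReal_sin, Complex.ofReal_mul, Complex.ofReal_natCast]
  rw [Finset.sum_congr rfl (fun k hk => pointComb (N+1) k hn
      (Finset.mem_Icc.1 hk).1 (by have := (Finset.mem_Icc.1 hk).2; omega))]
  rw [Finset.sum_sub_distrib, ← Finset.mul_sum, ← Finset.mul_sum]
  have hA : (∑ k ∈ Icc 1 N, ∑ j ∈ range (N+1),
        (j:ℂ) * Complex.exp (2*↑π*Complex.I*↑k/((N+1:ℕ):ℂ))^j)
      = -(((N+1:ℕ):ℂ)*(((N+1:ℕ):ℂ)-1)/2) := by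
    rw [Finset.sum_comm]
    have h1 : ∀ j ∈ range (N+1),
        (∑ k ∈ Icc 1 N, (j:ℂ) * Complex.exp (2*↑π*Complex.I*↑k/((N+1:ℕ):ℂ))^j)
          = -(j:ℂ) := by
      intro j hj
      rw [← Finset.mul_sum, orthIcc N j]
      rcases Nat.eq_zero_or_pos j with h0 | h0
      · subst h0; simp
      · rw [if_neg]
        · ring
        · intro hd
          have := Nat.le_of_dvd h0 hd
          have hjr := Finset.mem_range.1 hj
          omega
    rw [Finset.sum_congr rfl h1, ← sumId]
    rw [← Finset.sum_neg_distrib]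
  have hB : (∑ k ∈ Icc 1 N, (∑ j ∈ range (N+1),
        (j:ℂ) * Complex.exp (2*↑π*Complex.I*↑k/((N+1:ℕ):ℂ))^j)^2)
      = ((N+1:ℕ):ℂ)*(((N+1:ℕ):ℂ)*(((N+1:ℕ):ℂ)*(((N+1:ℕ):ℂ)-1)/2)
          - ((N+1:ℕ):ℂ)*(((N+1:ℕ):ℂ)-1)*(2*((N+1:ℕ):ℂ)-1)/6)
        - (((N+1:ℕ):ℂ)*(((N+1:ℕ):ℂ)-1)/2)^2 := by
    have hTsq : ∀ k ∈ Icc 1 N, (∑ j ∈ range (N+1),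
          (j:ℂ) * Complex.exp (2*↑π*Complex.I*↑k/((N+1:ℕ):ℂ))^j)^2
        = ∑ j ∈ range (N+1), ∑ l ∈ range (N+1),
            ((j:ℂ)*(l:ℂ)) * Complex.exp (2*↑π*Complex.I*↑k/((N+1:ℕ):ℂ))^(j+l) := by
      intro k _
      rw [sq, Finset.sum_mul_sum]
      exact Finset.sum_congr rfl fun j _ => Finset.sum_congr rfl fun l _ => by
        rw [pow_add]; ring
    rw [Finset.sum_congr rfl hTsq, Finset.sum_comm]
    have h2 : ∀ j ∈ range (N+1),
        (∑ k ∈ Icc 1 N, ∑ l ∈ range (N+1),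
          ((j:ℂ)*(l:ℂ)) * Complex.exp (2*↑π*Complex.I*↑k/((N+1:ℕ):ℂ))^(j+l))
        = (j:ℂ) * (((N+1:ℕ):ℂ) * (((N+1-j) % (N+1) : ℕ):ℂ))
          - (j:ℂ)*(((N+1:ℕ):ℂ)*(((N+1:ℕ):ℂ)-1)/2) := by
      intro j hj
      rw [Finset.sum_comm]
      have h3 : ∀ l ∈ range (N+1),
          (∑ k ∈ Icc 1 N,
            ((j:ℂ)*(l:ℂ)) * Complex.exp (2*↑π*Complex.I*↑k/((N+1:ℕ):ℂ))^(j+l))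
          = (j:ℂ) * ((l:ℂ) * (if (N+1) ∣ (j+l) then ((N+1:ℕ):ℂ) else 0))
            - (j:ℂ)*(l:ℂ) := by
        intro l _
        rw [← Finset.mul_sum, orthIcc N (j+l)]
        ring
      rw [Finset.sum_congr rfl h3, Finset.sum_sub_distrib, ← Finset.mul_sum,
        ← Finset.mul_sum, innerL (N+1) j hn (Finset.mem_range.1 hj), sumId]
    have h4 : ∀ j ∈ range (N+1),
        ((j:ℂ) * (((N+1:ℕ):ℂ) * (((N+1-j) % (N+1) : ℕ):ℂ))
          - (j:ℂ)*(((N+1:ℕ):ℂ)*(((N+1:ℕ):ℂ)-1)/2))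
        = ((N+1:ℕ):ℂ) * ((j:ℂ)*((N+1:ℕ):ℂ) - (j:ℂ)^2)
          - (j:ℂ)*(((N+1:ℕ):ℂ)*(((N+1:ℕ):ℂ)-1)/2) := by
      intro j hj
      have hjr := Finset.mem_range.1 hj
      rcases Nat.eq_zero_or_pos j with h0 | h0
      · subst h0; simp
      · rw [Nat.mod_eq_of_lt (by omega : N+1-j < N+1),
          Nat.cast_sub (by omega : j ≤ N+1)]
        push_cast
        ring
    rw [Finset.sum_congr rfl h2, Finset.sum_congr rfl h4, Finset.sum_sub_distrib,
      ← Finset.mul_sum, ← Finset.sum_mul, sumId, Finset.sum_sub_distrib,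
      ← Finset.sum_mul, sumId, sumSq]
    ring
  rw [hA, hB]
  have hC' : ((N:ℂ)+1) ≠ 0 := by
    intro h
    apply hC
    push_cast
    linear_combination h
  push_cast
  field_simp
  ring
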